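/- Let I be an ad-nilpotent ideal in gl_{n+1} and P_I the unit interval order on {1,...,n+1} defined by i ≺ j iff t_{ij} ∈ I. Then the Gerstenhaber partition λ_I equals the Greene–Kleitman partition of the poset P_I: for every k, λ_{I,1} + ... + λ_{I,k} is the maximum cardinality of a union of k chains in P_I. -/

import Mathlib

/-- An upper order ideal of matrix positions: `I ⊆ {(i,j) : 1 ≤ i < j ≤ n+1}` with
`(i,j) ∈ I`, `i' ≤ i`, `j ≤ j'`, `i' < j'` implying `(i',j') ∈ I`. -/
def IsMatrixIdeal (n : ℕ) (I : Finset (ℕ × ℕ)) : Prop :=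
  (∀ p ∈ I, 1 ≤ p.1 ∧ p.1 < p.2 ∧ p.2 ≤ n + 1) ∧
  (∀ p ∈ I, ∀ q : ℕ × ℕ, 1 ≤ q.1 → q.1 ≤ p.1 → p.2 ≤ q.2 → q.2 ≤ n + 1 → q ∈ I)


/-- The ad-nilpotent ideal of `gl_{n+1}(ℂ)` spanned by the elementary matrices
`t_{ij}` for `(i,j) ∈ I` (1-indexed positions). -/
noncomputable def idealSubmoduleM (n : ℕ) (I : Finset (ℕ × ℕ)) :
    Submodule ℂ (Matrix (Fin (n + 1)) (Fin (n + 1)) ℂ) :=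
  Submodule.span ℂ
    {m | ∃ p ∈ I, m = Matrix.of (fun a b : Fin (n + 1) =>
      if (a : ℕ) + 1 = p.1 ∧ (b : ℕ) + 1 = p.2 then (1 : ℂ) else 0)}

/-- `C` is a chain in the unit interval order `P_I` on `{1, …, n+1}` defined by
`i ≺ j` iff `(i,j) ∈ I`: any two distinct elements are comparable. -/
def IsChainInP (n : ℕ) (I : Finset (ℕ × ℕ)) (C : Finset ℕ) : Prop :=
  C ⊆ Finset.Icc 1 (n + 1) ∧
  ∀ a ∈ C, ∀ b ∈ C, a ≠ b → (a, b) ∈ I ∨ (b, a) ∈ I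


open Finset

namespace GK

open scoped Classical in
noncomputable def fmin (n : ℕ) (I : Finset (ℕ × ℕ)) (b : ℕ) : ℕ :=
  if _ : ∃ j, (b, j) ∈ I then sInf {j | (b, j) ∈ I} else n + 2

section basic
variable {n : ℕ} {I : Finset (ℕ × ℕ)}

theorem fmin_le (n : ℕ) {b j : ℕ} (h : (b, j) ∈ I) : fmin n I b ≤ j := by
  rw [fmin, dif_pos ⟨j, h⟩]
  exact Nat.sInf_le (show j ∈ {j | (b, j) ∈ I} from h)

theorem fmin_mem (n : ℕ) {b j : ℕ} (h : (b, j) ∈ I) : (b, fmin n I b) ∈ I := by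
  rw [fmin, dif_pos ⟨j, h⟩]
  exact Nat.sInf_mem (s := {j | (b, j) ∈ I}) ⟨j, h⟩

variable (hI : IsMatrixIdeal n I)
include hI

theorem mem_of_fmin_le {b j : ℕ} (hb : 1 ≤ b) (h : fmin n I b ≤ j) (hj : j ≤ n + 1) :
    (b, j) ∈ I := by
  by_cases he : ∃ j', (b, j') ∈ I
  · obtain ⟨j', hj'⟩ := he
    have hm := fmin_mem n hj'
    exact hI.2 _ hm (b, j) hb le_rfl h hj
  · rw [fmin, dif_neg he] at h; omega

theorem fmin_gt {b : ℕ} (hb : b ≤ n + 1) : b < fmin n I b := by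
  by_cases he : ∃ j', (b, j') ∈ I
  · obtain ⟨j', hj'⟩ := he
    exact (hI.1 _ (fmin_mem n hj')).2.1
  · rw [fmin, dif_neg he]; omega

theorem fmin_le_top (b : ℕ) : fmin n I b ≤ n + 2 := by
  by_cases he : ∃ j', (b, j') ∈ I
  · obtain ⟨j', hj'⟩ := he
    have := (hI.1 _ (fmin_mem n hj')).2.2
    have := fmin_le n hj'
    omega
  · rw [fmin, dif_neg he]

theorem fmin_mono {b c : ℕ} (hb : 1 ≤ b) (hbc : b ≤ c) : fmin n I b ≤ fmin n I c := by
  by_cases he : ∃ j', (c, j') ∈ I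
  · obtain ⟨j', hj'⟩ := he
    have hm := fmin_mem n hj'
    have h1 := hI.1 _ hm
    have : (b, fmin n I c) ∈ I := hI.2 _ hm (b, fmin n I c) hb hbc le_rfl h1.2.2
    exact fmin_le n this
  · have hc2 : fmin n I c = n + 2 := by rw [fmin, dif_neg he]
    rw [hc2]; exact fmin_le_top hI b

theorem not_mem_of_lt_fmin {b j : ℕ} (h : j < fmin n I b) : (b, j) ∉ I :=
  fun hm => absurd (fmin_le n hm) (by omega)

theorem I_bounds {a b : ℕ} (h : (a, b) ∈ I) : 1 ≤ a ∧ a < b ∧ b ≤ n + 1 := hI.1 _ h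

end basic

open scoped Classical in
/-- Greedy feasible set construction. -/
noncomputable def gU (n : ℕ) (I : Finset (ℕ × ℕ)) (k : ℕ) : ℕ → Finset ℕ
  | 0 => ∅
  | a + 1 =>
    if (a + 1 ≤ n + 1) ∧
        (∀ b ∈ Icc 1 (a+1), a + 1 < fmin n I b → ((gU n I k a) ∩ Icc b a).card < k)
    then insert (a + 1) (gU n I k a) else gU n I k a

variable (n : ℕ) (I : Finset (ℕ × ℕ))

theorem gU_subset (k : ℕ) : ∀ a, gU n I k a ⊆ Icc 1 a := by
  intro a
  induction a with
  | zero => simp [gU]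
  | succ a ih =>
    rw [gU]
    split
    · intro u hu
      rcases Finset.mem_insert.1 hu with h | h
      · subst h; simp
      · have := ih h; simp only [Finset.mem_Icc] at this ⊢; omega
    · intro u hu; have := ih hu; simp only [Finset.mem_Icc] at this ⊢; omega

theorem gU_localize (k : ℕ) : ∀ a c, c ≤ a → gU n I k a ∩ Icc 1 c = gU n I k c := by
  intro a
  induction a with
  | zero => intro c hc; interval_cases c; simp [gU]
  | succ a ih =>
    intro c hc
    rcases Nat.eq_or_lt_of_le hc with h | h
    · subst h
      apply Finset.inter_eq_left.2
      exact gU_subset n I k _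
    · have hca : c ≤ a := by omega
      rw [gU]
      split
      · rw [Finset.insert_inter_of_notMem, ih c hca]
        simp only [Finset.mem_Icc]; omega
      · exact ih c hca

theorem gU_mono (k : ℕ) {a a' : ℕ} (h : a ≤ a') : gU n I k a ⊆ gU n I k a' := by
  rw [← gU_localize n I k a' a h]
  exact Finset.inter_subset_left

theorem gU_inv (k : ℕ) : ∀ a, ∀ b, 1 ≤ b → a < fmin n I b →
    ((gU n I k a) ∩ Icc b a).card ≤ k := by
  intro a
  induction a with
  | zero => intro b hb h; simp [gU]
  | succ a ih =>
    intro b hb h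
    have hlt : a < fmin n I b := by omega
    have hnm : a + 1 ∉ gU n I k a := by
      intro hmem; have := gU_subset n I k a hmem
      simp only [Finset.mem_Icc] at this; omega
    rw [gU]
    split
    · rename_i hcond
      by_cases hba : b ≤ a + 1
      · have hsub : (insert (a+1) (gU n I k a)) ∩ Icc b (a+1)
            ⊆ insert (a+1) (gU n I k a ∩ Icc b a) := by
          intro u hu
          simp only [Finset.mem_inter, Finset.mem_insert, Finset.mem_Icc] at hu ⊢
          rcases hu with ⟨h1 | h1, h2, h3⟩
          · left; exact h1
          · by_cases hu1 : u = a + 1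
            · left; exact hu1
            · right; exact ⟨h1, h2, by omega⟩
        calc ((insert (a+1) (gU n I k a)) ∩ Icc b (a+1)).card
            ≤ (insert (a+1) (gU n I k a ∩ Icc b a)).card := Finset.card_le_card hsub
          _ ≤ (gU n I k a ∩ Icc b a).card + 1 := Finset.card_insert_le _ _
          _ ≤ k := hcond.2 b (by simp only [Finset.mem_Icc]; omega) h
      · have : Icc b (a+1) = ∅ := by rw [Finset.Icc_eq_empty]; omega
        rw [this, Finset.inter_empty]; simp
    · have heq : (gU n I k a ∩ Icc b (a+1)).card = (gU n I k a ∩ Icc b a).card := by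
        congr 1
        ext u
        simp only [Finset.mem_inter, Finset.mem_Icc]
        constructor
        · rintro ⟨hu, h1, h2⟩
          refine ⟨hu, h1, ?_⟩
          have := gU_subset n I k a hu; simp only [Finset.mem_Icc] at this; omega
        · rintro ⟨hu, h1, h2⟩; exact ⟨hu, h1, by omega⟩
      rw [heq]; exact ih b hb hlt

/-- Window feasibility of the final greedy set `U = gU n I k (n+1)`. -/
theorem gU_feas (hI : IsMatrixIdeal n I) (k : ℕ) {b c : ℕ} (hb : 1 ≤ b)
    (hc : c < fmin n I b) (hcn : c ≤ n + 1) :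
    ((gU n I k (n+1)) ∩ Icc b c).card ≤ k := by
  have h1 : gU n I k (n+1) ∩ Icc b c ⊆ gU n I k c ∩ Icc b c := by
    intro u hu
    simp only [Finset.mem_inter, Finset.mem_Icc] at hu ⊢
    refine ⟨?_, hu.2⟩
    have : u ∈ gU n I k (n+1) ∩ Icc 1 c := by
      simp only [Finset.mem_inter, Finset.mem_Icc]
      exact ⟨hu.1, by omega, hu.2.2⟩
    rw [gU_localize n I k (n+1) c hcn] at this
    exact this
  calc (gU n I k (n+1) ∩ Icc b c).card ≤ (gU n I k c ∩ Icc b c).card := Finset.card_le_card h1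
    _ ≤ k := gU_inv n I k c b hb hc

/-- Rejection produces a tight window. -/
theorem gU_reject (k : ℕ) {r : ℕ} (hr1 : 1 ≤ r) (hrn : r ≤ n + 1)
    (hrej : r ∉ gU n I k (n+1)) :
    ∃ b, 1 ≤ b ∧ b ≤ r ∧ r < fmin n I b ∧
      ((gU n I k (n+1)) ∩ Icc b r).card = k := by
  obtain ⟨a, rfl⟩ : ∃ a, r = a + 1 := ⟨r - 1, by omega⟩
  have hrej' : a + 1 ∉ gU n I k (a+1) := fun h => hrej (gU_mono n I k hrn h)
  rw [gU] at hrej'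
  have hcond : ¬((a + 1 ≤ n + 1) ∧
      (∀ b ∈ Icc 1 (a+1), a + 1 < fmin n I b → ((gU n I k a) ∩ Icc b a).card < k)) := by
    intro hc
    rw [if_pos hc] at hrej'
    exact hrej' (Finset.mem_insert_self _ _)
  push_neg at hcond
  obtain ⟨b, hbmem, hfb, hcard⟩ := hcond hrn
  simp only [Finset.mem_Icc] at hbmem
  have hinv := gU_inv n I k a b hbmem.1 (by omega)
  refine ⟨b, hbmem.1, hbmem.2, hfb, ?_⟩
  have heq : gU n I k (n+1) ∩ Icc b (a+1) = gU n I k a ∩ Icc b a := by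
    ext u
    simp only [Finset.mem_inter, Finset.mem_Icc]
    constructor
    · rintro ⟨hu, h1, h2⟩
      have hu2 : u ≤ a := by
        rcases Nat.eq_or_lt_of_le h2 with h | h
        · exfalso; apply hrej; rw [← h]; exact hu
        · omega
      have : u ∈ gU n I k (n+1) ∩ Icc 1 a := by
        simp only [Finset.mem_inter, Finset.mem_Icc]; exact ⟨hu, by omega, hu2⟩
      rw [gU_localize n I k (n+1) a (by omega)] at this
      exact ⟨this, h1, hu2⟩
    · rintro ⟨hu, h1, h2⟩
      exact ⟨gU_mono n I k (by omega) hu, h1, by omega⟩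
  rw [heq]
  omega

end GK

-- chunk 2: dual antichain family
namespace GK
open Finset

variable {n : ℕ} {I : Finset (ℕ × ℕ)}

theorem window_antichain (hI : IsMatrixIdeal n I) {b r : ℕ} (hb : 1 ≤ b)
    (h : r < fmin n I b) {u v : ℕ} (hu : u ∈ Icc b r) (hv : v ∈ Icc b r)
    (huv : (u, v) ∈ I) : False := by
  simp only [Finset.mem_Icc] at hu hv
  have h1 : fmin n I b ≤ fmin n I u := fmin_mono hI hb hu.1
  have h2 : fmin n I u ≤ v := fmin_le n huv
  omega

theorem dual (hI : IsMatrixIdeal n I) (k : ℕ) :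
    ∀ c, c ≤ n + 1 → ∃ (m : ℕ) (S : Finset ℕ),
      S ⊆ Icc 1 c ∧
      (∀ r ∈ Icc 1 c, r ∉ gU n I k (n+1) → r ∈ S) ∧
      S.card + ((Icc 1 c).filter (· ∈ gU n I k (n+1))).card = k * m + c ∧
      (∀ C : Finset ℕ, C ⊆ S →
        (∀ a ∈ C, ∀ b ∈ C, a ≠ b → (a, b) ∈ I ∨ (b, a) ∈ I) → C.card ≤ m) := by
  intro c
  induction c using Nat.strong_induction_on with
  | _ c ih =>
    intro hc
    classical
    set U := gU n I k (n+1) with hU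
    by_cases hrej : ∃ r ∈ Icc 1 c, r ∉ U
    · obtain ⟨r0, hr0⟩ := hrej
      have hne : ((Icc 1 c).filter (· ∉ U)).Nonempty :=
        ⟨r0, Finset.mem_filter.2 ⟨hr0.1, hr0.2⟩⟩
      set r := ((Icc 1 c).filter (· ∉ U)).max' hne with hr
      have hrmem := ((Icc 1 c).filter (· ∉ U)).max'_mem hne
      rw [Finset.mem_filter, Finset.mem_Icc] at hrmem
      obtain ⟨⟨hr1, hrc⟩, hrU⟩ := hrmem
      have hrmax : ∀ r' ∈ Icc 1 c, r' ∉ U → r' ≤ r := by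
        intro r' h1 h2
        exact Finset.le_max' _ _ (Finset.mem_filter.2 ⟨h1, h2⟩)
      obtain ⟨b, hb1, hbr, hbf, hcard⟩ := gU_reject n I k hr1 (by omega) hrU
      obtain ⟨m', S', hS'sub, hS'cov, hS'card, hS'chain⟩ :=
        ih (b-1) (by omega) (by omega)
      refine ⟨m' + 1, S' ∪ Icc b r, ?_, ?_, ?_, ?_⟩
      · intro u hu
        rcases Finset.mem_union.1 hu with h | h
        · have := hS'sub h; simp only [Finset.mem_Icc] at this ⊢; omega
        · simp only [Finset.mem_Icc] at h ⊢; omega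
      · intro u hu hunU
        simp only [Finset.mem_Icc] at hu
        rcases le_or_gt u (b-1) with h | h
        · exact Finset.mem_union_left _
            (hS'cov u (by simp only [Finset.mem_Icc]; omega) hunU)
        · have hur : u ≤ r := hrmax u (by simp only [Finset.mem_Icc]; omega) hunU
          exact Finset.mem_union_right _ (by simp only [Finset.mem_Icc]; omega)
      · -- cardinality bookkeeping
        have hdisj : Disjoint S' (Icc b r) := by
          rw [Finset.disjoint_left]
          intro u hu hu2
          have := hS'sub hu
          simp only [Finset.mem_Icc] at this hu2; omega
        rw [Finset.card_union_of_disjoint hdisj]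
        have hsplit : (Icc 1 c).filter (· ∈ U) =
            ((Icc 1 (b-1)).filter (· ∈ U)) ∪ ((Icc b r).filter (· ∈ U))
              ∪ ((Icc (r+1) c).filter (· ∈ U)) := by
          ext u
          simp only [Finset.mem_union, Finset.mem_filter, Finset.mem_Icc]
          constructor
          · rintro ⟨⟨h1, h2⟩, h3⟩
            rcases le_or_gt u (b-1) with h | h
            · exact Or.inl (Or.inl ⟨⟨h1, h⟩, h3⟩)
            · rcases le_or_gt u r with h' | h'
              · exact Or.inl (Or.inr ⟨⟨by omega, h'⟩, h3⟩)
              · exact Or.inr ⟨⟨by omega, h2⟩, h3⟩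
          · rintro ((⟨⟨h1, h2⟩, h3⟩ | ⟨⟨h1, h2⟩, h3⟩) | ⟨⟨h1, h2⟩, h3⟩)
            · exact ⟨⟨h1, by omega⟩, h3⟩
            · exact ⟨⟨by omega, by omega⟩, h3⟩
            · exact ⟨⟨by omega, by omega⟩, h3⟩
        have hd1 : Disjoint ((Icc 1 (b-1)).filter (· ∈ U)) ((Icc b r).filter (· ∈ U)) := by
          rw [Finset.disjoint_left]; intro u hu hu2
          simp only [Finset.mem_filter, Finset.mem_Icc] at hu hu2; omega
        have hd2 : Disjoint (((Icc 1 (b-1)).filter (· ∈ U)) ∪ ((Icc b r).filter (· ∈ U)))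
            ((Icc (r+1) c).filter (· ∈ U)) := by
          rw [Finset.disjoint_left]; intro u hu hu2
          simp only [Finset.mem_union, Finset.mem_filter, Finset.mem_Icc] at hu hu2
          rcases hu with h | h <;> omega
        rw [hsplit, Finset.card_union_of_disjoint hd2, Finset.card_union_of_disjoint hd1]
        have e1 : ((Icc b r).filter (· ∈ U)).card = k := by
          rw [← hcard]; congr 1
          rw [Finset.filter_mem_eq_inter, Finset.inter_comm]
        have e2 : ((Icc (r+1) c).filter (· ∈ U)).card = c - r := by
          have : (Icc (r+1) c).filter (· ∈ U) = Icc (r+1) c := by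
            apply Finset.filter_true_of_mem
            intro u hu
            simp only [Finset.mem_Icc] at hu
            by_contra hnot
            have := hrmax u (by simp only [Finset.mem_Icc]; omega) hnot
            omega
          rw [this, Nat.card_Icc]; omega
        have e3 : (Icc b r).card = r + 1 - b := Nat.card_Icc b r
        have hmul : k * (m' + 1) = k * m' + k := by ring
        rw [e1, e2, e3]
        omega
      · -- chain bound
        intro C hC hchain
        have hCsub : C ⊆ (C ∩ S') ∪ (C ∩ Icc b r) := by
          intro u hu
          rcases Finset.mem_union.1 (hC hu) with h | h
          · exact Finset.mem_union_left _ (Finset.mem_inter.2 ⟨hu, h⟩)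
          · exact Finset.mem_union_right _ (Finset.mem_inter.2 ⟨hu, h⟩)
        have h1 : (C ∩ S').card ≤ m' := by
          apply hS'chain _ Finset.inter_subset_right
          intro a ha b hb hab
          exact hchain a (Finset.mem_inter.1 ha).1 b (Finset.mem_inter.1 hb).1 hab
        have h2 : (C ∩ Icc b r).card ≤ 1 := by
          rw [Finset.card_le_one]
          intro u hu v hv
          by_contra huv
          rcases hchain u (Finset.mem_inter.1 hu).1 v (Finset.mem_inter.1 hv).1 huv with h | h
          · exact window_antichain hI hb1 hbf (Finset.mem_inter.1 hu).2
              (Finset.mem_inter.1 hv).2 h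
          · exact window_antichain hI hb1 hbf (Finset.mem_inter.1 hv).2
              (Finset.mem_inter.1 hu).2 h
        calc C.card ≤ ((C ∩ S') ∪ (C ∩ Icc b r)).card := Finset.card_le_card hCsub
          _ ≤ (C ∩ S').card + (C ∩ Icc b r).card := Finset.card_union_le _ _
          _ ≤ m' + 1 := by omega
    · -- no rejects
      push_neg at hrej
      refine ⟨0, ∅, by simp, by intro r h1 h2; exact absurd (hrej r h1) (by simp [h2]), ?_, ?_⟩
      · simp only [Finset.card_empty, Nat.zero_add, Nat.mul_zero]
        have : (Icc 1 c).filter (· ∈ U) = Icc 1 c :=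
          Finset.filter_true_of_mem (fun u hu => hrej u hu)
        rw [this, Nat.card_Icc]; omega
      · intro C hC _
        simp [Finset.subset_empty.1 hC]

end GK

-- chunk 3 : linear algebra rank bound
namespace GK
open Finset Submodule Module

section rankLemma

variable {N : ℕ}

noncomputable def VT (T : Finset (Fin N)) : Submodule ℂ (Fin N → ℂ) :=
  Submodule.span ℂ ((fun b => Pi.single b (1 : ℂ)) '' ↑T)

theorem mem_VT {v : Fin N → ℂ} {T : Finset (Fin N)} (h : ∀ a, v a ≠ 0 → a ∈ T) :
    v ∈ VT T := by
  classical
  have hv : v = ∑ a : Fin N, v a • (Pi.single a 1 : Fin N → ℂ) := by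
    ext j
    rw [Finset.sum_apply]
    simp [Pi.single_apply]
  rw [hv]
  apply Submodule.sum_mem
  intro a _
  by_cases ha : v a = 0
  · rw [ha, zero_smul]; exact Submodule.zero_mem _
  · exact Submodule.smul_mem _ _ (Submodule.subset_span ⟨a, h a ha, rfl⟩)

theorem VT_union (T T' : Finset (Fin N)) : VT (T ∪ T') = VT T ⊔ VT T' := by
  rw [VT, VT, VT, Finset.coe_union, Set.image_union, Submodule.span_union]

theorem VT_mono {T T' : Finset (Fin N)} (h : T ⊆ T') : VT T ≤ VT T' :=
  Submodule.span_mono (Set.image_mono (Finset.coe_subset.2 h))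

theorem finrank_VT_le (T : Finset (Fin N)) : finrank ℂ (VT T) ≤ T.card := by
  classical
  have h1 : VT T = Submodule.span ℂ ↑(T.image (fun b => Pi.single b (1 : ℂ))) := by
    rw [VT, Finset.coe_image]
  have h2 := finrank_span_finset_le_card (R := ℂ) (T.image fun b => Pi.single b (1 : ℂ))
  rw [Set.finrank] at h2
  rw [h1]
  exact h2.trans (Finset.card_image_le)

theorem VT_univ : VT (univ : Finset (Fin N)) = ⊤ := by
  rw [eq_top_iff]
  intro v _
  exact mem_VT (fun a _ => Finset.mem_univ a)

theorem finrank_sup_le (p q : Submodule ℂ (Fin N → ℂ)) :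
    finrank ℂ ↥(p ⊔ q) ≤ finrank ℂ p + finrank ℂ q := by
  have := Submodule.finrank_sup_add_finrank_inf_eq p q
  omega

theorem rank_eq_VT (A : Matrix (Fin N) (Fin N) ℂ) :
    A.rank = finrank ℂ (Submodule.map A.mulVecLin (VT univ)) := by
  rw [VT_univ]
  rw [show A.rank = finrank ℂ (LinearMap.range A.mulVecLin) from rfl,
    LinearMap.range_eq_map]

theorem map_VT_le {A : Matrix (Fin N) (Fin N) ℂ} {T Rt : Finset (Fin N)}
    (h : ∀ b ∈ T, ∀ a, A a b ≠ 0 → a ∈ Rt) :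
    Submodule.map A.mulVecLin (VT T) ≤ VT Rt := by
  rw [VT, Submodule.map_span]
  apply Submodule.span_le.2
  rintro _ ⟨_, ⟨b, hb, rfl⟩, rfl⟩
  apply mem_VT
  intro a ha
  rw [Matrix.mulVecLin_apply, Matrix.mulVec_single_one] at ha
  simp only [Matrix.col_apply] at ha
  exact h b hb a ha

theorem map_congr_of_eqOn {f g : (Fin N → ℂ) →ₗ[ℂ] (Fin N → ℂ)} {s : Set (Fin N → ℂ)}
    {Z : Submodule ℂ (Fin N → ℂ)} (hZ : Z ≤ Submodule.span ℂ s) (h : Set.EqOn f g s) :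
    Submodule.map f Z = Submodule.map g Z := by
  ext w
  simp only [Submodule.mem_map]
  constructor
  · rintro ⟨v, hv, rfl⟩
    exact ⟨v, hv, (LinearMap.eqOn_span h (hZ hv)).symm⟩
  · rintro ⟨v, hv, rfl⟩
    exact ⟨v, hv, LinearMap.eqOn_span h (hZ hv)⟩

variable {R : Fin N → Fin N → Prop}

theorem pow_supp (hR : Transitive R) {W : Finset (Fin N)} {x : Matrix (Fin N) (Fin N) ℂ}
    (hx : ∀ a b, x a b ≠ 0 → R a b ∧ a ∈ W ∧ b ∈ W) :
    ∀ t, ∀ a b, (x ^ (t+1)) a b ≠ 0 → R a b ∧ a ∈ W ∧ b ∈ W := by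
  intro t
  induction t with
  | zero => intro a b h; rw [pow_one] at h; exact hx a b h
  | succ t ih =>
    intro a b h
    rw [pow_succ, Matrix.mul_apply] at h
    obtain ⟨c, _, hc⟩ := Finset.exists_ne_zero_of_sum_ne_zero h
    have h1 := ih a c (left_ne_zero_of_mul hc)
    have h2 := hx c b (right_ne_zero_of_mul hc)
    exact ⟨hR h1.1 h2.1, h1.2.1, h2.2.2⟩

theorem rankUB (hR : Transitive R) (hlt : ∀ a b, R a b → a < b) :
    ∀ m, 1 ≤ m → ∀ (W S : Finset (Fin N)) (x : Matrix (Fin N) (Fin N) ℂ),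
      (∀ a b, x a b ≠ 0 → R a b ∧ a ∈ W ∧ b ∈ W) → S ⊆ W →
      (∀ C : Finset (Fin N), C ⊆ S →
        (∀ a ∈ C, ∀ b ∈ C, a ≠ b → R a b ∨ R b a) → C.card ≤ m) →
      (x ^ m).rank + S.card ≤ W.card := by
  intro m
  induction m with
  | zero => intro h; omega
  | succ m ih =>
    intro _ W S x hx hSW hchain
    classical
    by_cases hm0 : m = 0
    · -- base case m + 1 = 1
      subst hm0
      set D := W.filter (fun w => ∃ s ∈ S, R w s) with hD
      have hDS : ∀ d ∈ D, d ∉ S := by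
        intro d hd hdS
        obtain ⟨s, hsS, hds⟩ := (Finset.mem_filter.1 hd).2
        have hdne : d ≠ s := fun h => by subst h; exact absurd (hlt _ _ hds) (lt_irrefl _)
        have hle : ({d, s} : Finset (Fin N)).card ≤ 1 := by
          apply hchain
          · intro u hu
            rcases Finset.mem_insert.1 hu with h | h
            · subst h; exact hdS
            · rw [Finset.mem_singleton.1 h]; exact hsS
          · intro a ha b hb hab
            rcases Finset.mem_insert.1 ha with h | h <;>
              rcases Finset.mem_insert.1 hb with h' | h'
            · subst h; subst h'; exact absurd rfl hab
            · rw [Finset.mem_singleton.1 h']; subst h; exact Or.inl hds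
            · rw [Finset.mem_singleton.1 h]; subst h'; exact Or.inr hds
            · rw [Finset.mem_singleton.1 h, Finset.mem_singleton.1 h'] at hab
              exact absurd rfl hab
        rw [Finset.card_pair hdne] at hle
        omega
      have hsupp1 : ∀ b ∈ D ∪ S, ∀ a, x a b ≠ 0 → a ∈ D := by
        intro b hb a ha
        obtain ⟨hab, haW, hbW⟩ := hx a b ha
        rcases Finset.mem_union.1 hb with h | h
        · obtain ⟨_, s, hsS, hbs⟩ := Finset.mem_filter.1 h
          exact Finset.mem_filter.2 ⟨haW, s, hsS, hR hab hbs⟩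
        · exact Finset.mem_filter.2 ⟨haW, b, h, hab⟩
      have huniv : (univ : Finset (Fin N)) = (D ∪ S) ∪ ((W \ (D ∪ S)) ∪ (univ \ W)) := by
        ext u
        simp only [Finset.mem_union, Finset.mem_sdiff, Finset.mem_univ, true_iff, iff_true,
          true_and]
        tauto
      rw [pow_one, rank_eq_VT, huniv, VT_union (D ∪ S) ((W \ (D ∪ S)) ∪ (univ \ W)),
        VT_union (W \ (D ∪ S)) (univ \ W), Submodule.map_sup, Submodule.map_sup]
      have e1 : finrank ℂ (Submodule.map x.mulVecLin (VT (D ∪ S))) ≤ D.card :=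
        le_trans (Submodule.finrank_mono (map_VT_le hsupp1)) (finrank_VT_le D)
      have e2 : finrank ℂ (Submodule.map x.mulVecLin (VT (W \ (D ∪ S)))) ≤ (W \ (D ∪ S)).card :=
        le_trans (Submodule.finrank_map_le _ _) (finrank_VT_le _)
      have e3 : Submodule.map x.mulVecLin (VT (univ \ W)) ≤ VT (∅ : Finset (Fin N)) := by
        apply map_VT_le
        intro b hb a ha
        exact absurd (hx a b ha).2.2 (Finset.mem_sdiff.1 hb).2
      have e3' : finrank ℂ (Submodule.map x.mulVecLin (VT (univ \ W))) = 0 := by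
        have := le_trans (Submodule.finrank_mono e3) (finrank_VT_le (∅ : Finset (Fin N)))
        simpa using this
      have hcards : D.card + S.card + (W \ (D ∪ S)).card = W.card := by
        have hsub : D ∪ S ⊆ W :=
          Finset.union_subset (Finset.filter_subset _ _) hSW
        have h1 : (D ∪ S).card = D.card + S.card := by
          rw [Finset.card_union_of_disjoint (Finset.disjoint_left.2 hDS)]
        have h2 := Finset.card_sdiff_add_card_eq_card hsub
        omega
      have hs1 := finrank_sup_le (Submodule.map x.mulVecLin (VT (D ∪ S)))
        ((Submodule.map x.mulVecLin (VT (W \ (D ∪ S)))) ⊔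
          Submodule.map x.mulVecLin (VT (univ \ W)))
      have hs2 := finrank_sup_le (Submodule.map x.mulVecLin (VT (W \ (D ∪ S))))
        (Submodule.map x.mulVecLin (VT (univ \ W)))
      omega
    · -- inductive step, m ≥ 1
      have hm1 : 1 ≤ m := by omega
      set A := S.filter (fun s => ∀ s' ∈ S, ¬ R s s') with hA
      set O := W.filter (fun w => ∃ a ∈ A, R a w) with hO
      set W' := W \ (A ∪ O) with hW'
      set S' := S \ A with hS'
      set y : Matrix (Fin N) (Fin N) ℂ :=
        Matrix.of (fun a b => if a ∈ W' ∧ b ∈ W' then x a b else 0) with hy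
      have hAS : A ⊆ S := Finset.filter_subset _ _
      have hAmax : ∀ a ∈ A, ∀ s ∈ S, ¬ R a s := by
        intro a ha; exact (Finset.mem_filter.1 ha).2
      have hOnotS : ∀ o ∈ O, o ∉ S := by
        intro o ho hoS
        obtain ⟨_, a, haA, hao⟩ := Finset.mem_filter.1 ho
        exact hAmax a haA o hoS hao
      have hAnotO : ∀ a ∈ A, a ∉ O := fun a ha hao => hOnotS a hao (hAS ha)
      have hmemW' : ∀ a, a ∈ W' ↔ a ∈ W ∧ a ∉ A ∧ a ∉ O := by
        intro a; rw [hW', Finset.mem_sdiff, Finset.mem_union]; tauto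
      have hS'W' : S' ⊆ W' := by
        intro s hs
        obtain ⟨hsS, hsA⟩ := Finset.mem_sdiff.1 hs
        rw [hmemW']
        exact ⟨hSW hsS, hsA, fun h => hOnotS s h hsS⟩
      have hrowW' : ∀ b, (b ∈ W' ∨ b ∈ A) → ∀ a, x a b ≠ 0 → a ∈ W' := by
        intro b hb a ha
        obtain ⟨hab, haW, hbW⟩ := hx a b ha
        rw [hmemW']
        refine ⟨haW, ?_, ?_⟩
        · intro haA
          rcases hb with h | h
          · have : b ∈ O := Finset.mem_filter.2 ⟨hbW, a, haA, hab⟩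
            rw [hmemW'] at h; exact h.2.2 this
          · exact hAmax a haA b (hAS h) hab
        · intro haO
          obtain ⟨_, a', ha'A, ha'a⟩ := Finset.mem_filter.1 haO
          have h2 : R a' b := hR ha'a hab
          rcases hb with h | h
          · have : b ∈ O := Finset.mem_filter.2 ⟨hbW, a', ha'A, h2⟩
            rw [hmemW'] at h; exact h.2.2 this
          · exact hAmax a' ha'A b (hAS h) h2
      have hysupp : ∀ a b, y a b ≠ 0 → R a b ∧ a ∈ W' ∧ b ∈ W' := by
        intro a b hab
        by_cases h : a ∈ W' ∧ b ∈ W'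
        · rw [hy] at hab
          simp only [Matrix.of_apply] at hab
          rw [if_pos h] at hab
          exact ⟨(hx a b hab).1, h⟩
        · exfalso; apply hab; rw [hy]; simp only [Matrix.of_apply]; rw [if_neg h]
      have hchain' : ∀ C : Finset (Fin N), C ⊆ S' →
          (∀ a ∈ C, ∀ b ∈ C, a ≠ b → R a b ∨ R b a) → C.card ≤ m := by
        intro C hC hcomp
        rcases Finset.eq_empty_or_nonempty C with rfl | hne
        · simp
        · have hcC := C.max'_mem hne
          set c := C.max' hne with hc
          have hcS' := hC hcC
          obtain ⟨hcS, hcA⟩ := Finset.mem_sdiff.1 hcS'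
          have hex : ∃ s ∈ S, R c s := by
            by_contra hcon
            push_neg at hcon
            exact hcA (Finset.mem_filter.2 ⟨hcS, hcon⟩)
          obtain ⟨s, hsS, hcs⟩ := hex
          have hsC : s ∉ C := by
            intro hsC
            have h1 := Finset.le_max' C s hsC
            rw [← hc] at h1
            exact absurd (hlt _ _ hcs) (not_lt.2 h1)
          have hins : (insert s C).card ≤ m + 1 := by
            apply hchain
            · intro u hu
              rcases Finset.mem_insert.1 hu with h | h
              · subst h; exact hsS
              · exact Finset.sdiff_subset (hC h)
            · intro a ha b hb hab
              rcases Finset.mem_insert.1 ha with h | h <;>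
                rcases Finset.mem_insert.1 hb with h' | h'
              · subst h; subst h'; exact absurd rfl hab
              · subst h
                by_cases hbc : b = c
                · subst hbc; exact Or.inr hcs
                · rcases hcomp b h' c hcC hbc with hcomp1 | hcomp1
                  · exact Or.inr (hR hcomp1 hcs)
                  · have h1 := hlt _ _ hcomp1
                    have h2 := Finset.le_max' C b h'
                    rw [← hc] at h2
                    exact absurd h1 (not_lt.2 h2)
              · subst h'
                by_cases hac : a = c
                · subst hac; exact Or.inl hcs
                · rcases hcomp a h c hcC hac with hcomp1 | hcomp1
                  · exact Or.inl (hR hcomp1 hcs)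
                  · have h1 := hlt _ _ hcomp1
                    have h2 := Finset.le_max' C a h
                    rw [← hc] at h2
                    exact absurd h1 (not_lt.2 h2)
              · exact hcomp a h b h' hab
          rw [Finset.card_insert_of_notMem hsC] at hins
          omega
      have hIH := ih hm1 W' S' y hysupp hS'W' hchain'
      -- the key comparison lemma
      have hyW' : Submodule.map y.mulVecLin (VT univ) ≤ VT W' :=
        map_VT_le (fun b _ a ha => (hysupp a b ha).2.1)
      have heqOn : Set.EqOn (⇑x.mulVecLin) (⇑y.mulVecLin)
          ((fun b => Pi.single b (1 : ℂ)) '' ↑W') := by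
        rintro _ ⟨b, hb, rfl⟩
        rw [Matrix.mulVecLin_apply, Matrix.mulVecLin_apply, Matrix.mulVec_single_one,
          Matrix.mulVec_single_one]
        funext a
        simp only [Matrix.col_apply]
        by_cases haW' : a ∈ W'
        · rw [hy]; simp only [Matrix.of_apply]
          rw [if_pos ⟨haW', Finset.mem_coe.1 hb⟩]
        · have hx0 : x a b = 0 := by
            by_contra hne
            exact haW' (hrowW' b (Or.inl (Finset.mem_coe.1 hb)) a hne)
          rw [hx0, hy]; simp only [Matrix.of_apply]
          rw [if_neg (fun hcon => haW' hcon.1)]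
      have hQ : ∀ t (Z : Submodule ℂ (Fin N → ℂ)), Z ≤ VT W' →
          Submodule.map (x ^ t).mulVecLin Z ≤ Submodule.map (y ^ t).mulVecLin Z := by
        intro t
        induction t with
        | zero =>
          intro Z hZ
          rw [pow_zero, pow_zero, Matrix.mulVecLin_one, Submodule.map_id]
        | succ t iht =>
          intro Z hZ
          have hmapeq : Submodule.map x.mulVecLin Z = Submodule.map y.mulVecLin Z :=
            map_congr_of_eqOn hZ heqOn
          have hZ' : Submodule.map y.mulVecLin Z ≤ VT W' :=
            le_trans (Submodule.map_mono (le_trans hZ (VT_mono (Finset.subset_univ _)))) hyW'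
          calc Submodule.map (x ^ (t+1)).mulVecLin Z
              = Submodule.map (x ^ t).mulVecLin (Submodule.map x.mulVecLin Z) := by
                rw [pow_succ, Matrix.mulVecLin_mul, Submodule.map_comp]
            _ = Submodule.map (x ^ t).mulVecLin (Submodule.map y.mulVecLin Z) := by
                rw [hmapeq]
            _ ≤ Submodule.map (y ^ t).mulVecLin (Submodule.map y.mulVecLin Z) :=
                iht _ hZ'
            _ = Submodule.map (y ^ (t+1)).mulVecLin Z := by
                rw [pow_succ, Matrix.mulVecLin_mul, Submodule.map_comp]
      -- decomposition of the universe
      have hAOW : A ∪ O ⊆ W :=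
        Finset.union_subset (fun a ha => hSW (hAS ha)) (Finset.filter_subset _ _)
      have huniv : (univ : Finset (Fin N)) = (W' ∪ A) ∪ (O ∪ (univ \ W)) := by
        ext u
        simp only [Finset.mem_union, Finset.mem_univ, iff_true, true_iff]
        by_cases huW : u ∈ W
        · by_cases huA : u ∈ A
          · tauto
          · by_cases huO : u ∈ O
            · tauto
            · left; left; rw [hmemW']; exact ⟨huW, huA, huO⟩
        · right; right; exact Finset.mem_sdiff.2 ⟨Finset.mem_univ _, huW⟩
      have hrankgoal : (x ^ (m+1)).rank = finrank ℂ
          ↥((Submodule.map (x ^ (m+1)).mulVecLin (VT (W' ∪ A))) ⊔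
            ((Submodule.map (x ^ (m+1)).mulVecLin (VT O)) ⊔
              Submodule.map (x ^ (m+1)).mulVecLin (VT (univ \ W)))) := by
        conv_lhs => rw [rank_eq_VT, huniv, VT_union (W' ∪ A) (O ∪ (univ \ W)),
          VT_union O (univ \ W), Submodule.map_sup, Submodule.map_sup]
      -- piece 1
      have hstep : Submodule.map x.mulVecLin (VT (W' ∪ A)) ≤ VT W' := by
        apply map_VT_le
        intro b hb a ha
        exact hrowW' b (by rcases Finset.mem_union.1 hb with h | h; exact Or.inl h; exact Or.inr h) a ha
      have p1 : finrank ℂ (Submodule.map (x ^ (m+1)).mulVecLin (VT (W' ∪ A))) ≤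
          (y ^ m).rank := by
        have hc1 : Submodule.map (x ^ (m+1)).mulVecLin (VT (W' ∪ A)) ≤
            Submodule.map (y ^ m).mulVecLin (VT univ) := by
          calc Submodule.map (x ^ (m+1)).mulVecLin (VT (W' ∪ A))
              = Submodule.map (x ^ m).mulVecLin (Submodule.map x.mulVecLin (VT (W' ∪ A))) := by
                rw [pow_succ, Matrix.mulVecLin_mul, Submodule.map_comp]
            _ ≤ Submodule.map (x ^ m).mulVecLin (VT W') := Submodule.map_mono hstep
            _ ≤ Submodule.map (y ^ m).mulVecLin (VT W') := hQ m _ le_rfl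
            _ ≤ Submodule.map (y ^ m).mulVecLin (VT univ) :=
                Submodule.map_mono (VT_mono (Finset.subset_univ _))
        rw [rank_eq_VT]
        exact Submodule.finrank_mono hc1
      -- piece 2
      have p2 : finrank ℂ (Submodule.map (x ^ (m+1)).mulVecLin (VT O)) ≤ O.card := by
        have : Submodule.map (x ^ (m+1)).mulVecLin (VT O) =
            Submodule.map (x ^ m).mulVecLin (Submodule.map x.mulVecLin (VT O)) := by
          rw [pow_succ, Matrix.mulVecLin_mul, Submodule.map_comp]
        rw [this]
        exact le_trans (Submodule.finrank_map_le _ _)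
          (le_trans (Submodule.finrank_map_le _ _) (finrank_VT_le O))
      -- piece 3
      have p3 : finrank ℂ (Submodule.map (x ^ (m+1)).mulVecLin (VT (univ \ W))) = 0 := by
        have h3 : Submodule.map (x ^ (m+1)).mulVecLin (VT (univ \ W)) ≤
            VT (∅ : Finset (Fin N)) := by
          apply map_VT_le
          intro b hb a ha
          exact absurd (pow_supp hR hx m a b ha).2.2 (Finset.mem_sdiff.1 hb).2
        have := le_trans (Submodule.finrank_mono h3) (finrank_VT_le (∅ : Finset (Fin N)))
        simpa using this
      -- cards
      have hcard1 : W'.card + (A.card + O.card) = W.card := by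
        have h1 : W'.card + (A ∪ O).card = W.card := by
          rw [hW']; exact Finset.card_sdiff_add_card_eq_card hAOW
        have h2 : (A ∪ O).card = A.card + O.card :=
          Finset.card_union_of_disjoint (Finset.disjoint_left.2 hAnotO)
        omega
      have hcard2 : S'.card + A.card = S.card := by
        rw [hS']; exact Finset.card_sdiff_add_card_eq_card hAS
      have hrank : (x ^ (m+1)).rank ≤ (y ^ m).rank + O.card := by
        rw [hrankgoal]
        refine le_trans (finrank_sup_le _ _) ?_
        exact Nat.add_le_add p1
          ((finrank_sup_le _ _).trans ((Nat.add_le_add p2 p3.le).trans (by omega)))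
      omega

end rankLemma
end GK

-- chunk 4 : the witness matrix built from the greedy set
namespace GK
open Finset

section matrixU

variable {n : ℕ} {I : Finset (ℕ × ℕ)}

theorem supp_of_mem_ideal {x : Matrix (Fin (n+1)) (Fin (n+1)) ℂ}
    (hx : x ∈ idealSubmoduleM n I) :
    ∀ a b : Fin (n+1), x a b ≠ 0 → ((a : ℕ) + 1, (b : ℕ) + 1) ∈ I := by
  classical
  let T : Submodule ℂ (Matrix (Fin (n+1)) (Fin (n+1)) ℂ) :=
    { carrier := {m | ∀ a b : Fin (n+1), ((a : ℕ) + 1, (b : ℕ) + 1) ∉ I → m a b = 0}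
      add_mem' := by
        intro p q hp hq a b h
        have := hp a b h
        have := hq a b h
        simp only [Matrix.add_apply, this, ‹p a b = 0›, add_zero]
      zero_mem' := by intro a b h; rfl
      smul_mem' := by
        intro c p hp a b h
        simp only [Matrix.smul_apply, hp a b h, smul_zero] }
  have hle : idealSubmoduleM n I ≤ T := by
    rw [idealSubmoduleM]
    apply Submodule.span_le.2
    rintro m ⟨p, hpI, rfl⟩
    intro a b hnot
    simp only [Matrix.of_apply]
    rw [if_neg]
    rintro ⟨h1, h2⟩
    apply hnot
    have : ((a : ℕ) + 1, (b : ℕ) + 1) = p := Prod.ext h1 h2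
    rw [this]; exact hpI
  intro a b hab
  by_contra hni
  exact hab (hle hx a b hni)

end matrixU

section edm

variable (n : ℕ) (I : Finset (ℕ × ℕ)) (k : ℕ)

/-- the sorted enumeration of the greedy set -/
noncomputable def eU : Fin (gU n I k (n+1)).card ≃o {u // u ∈ gU n I k (n+1)} :=
  (gU n I k (n+1)).orderIsoOfFin rfl

variable {n I k}

theorem eU_mem (j : Fin (gU n I k (n+1)).card) : ((eU n I k j : ℕ)) ∈ gU n I k (n+1) :=
  (eU n I k j).2

theorem eU_bounds (j : Fin (gU n I k (n+1)).card) :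
    1 ≤ (eU n I k j : ℕ) ∧ (eU n I k j : ℕ) ≤ n + 1 := by
  have := gU_subset n I k (n+1) (eU_mem j)
  simpa using this

theorem eU_le {j j' : Fin (gU n I k (n+1)).card} (h : j ≤ j') :
    (eU n I k j : ℕ) ≤ (eU n I k j' : ℕ) :=
  Subtype.coe_le_coe.2 ((eU n I k).le_iff_le.2 h)

theorem eU_lt {j j' : Fin (gU n I k (n+1)).card} (h : j < j') :
    (eU n I k j : ℕ) < (eU n I k j' : ℕ) :=
  Subtype.coe_lt_coe.2 ((eU n I k).lt_iff_lt.2 h)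

/-- comparability of elements at distance at least `k` in the greedy set -/
theorem comp_edges (hI : IsMatrixIdeal n I) {j j' : Fin (gU n I k (n+1)).card}
    (h : (j : ℕ) + k ≤ (j' : ℕ)) :
    ((eU n I k j : ℕ), (eU n I k j' : ℕ)) ∈ I := by
  classical
  have hub := eU_bounds j
  have hub' := eU_bounds j'
  by_contra hni
  have hflt : (eU n I k j' : ℕ) < fmin n I (eU n I k j : ℕ) := by
    by_contra hge
    exact hni (mem_of_fmin_le hI hub.1 (by omega) hub'.2)
  -- build k+1 elements of U inside the window [u, u']
  have hjd : ∀ d : ℕ, d ≤ k → (j : ℕ) + d < (gU n I k (n+1)).card := by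
    intro d hd
    have := j'.isLt
    omega
  set g : {x // x ∈ Finset.range (k+1)} → ℕ := fun d =>
    ((eU n I k ⟨(j : ℕ) + (d : ℕ),
      hjd (d : ℕ) (Nat.lt_succ_iff.mp (Finset.mem_range.mp d.2))⟩ : ℕ)) with hg
  set F : Finset ℕ := (Finset.range (k+1)).attach.image g with hF
  have hgmono : ∀ d d' : {x // x ∈ Finset.range (k+1)}, (d : ℕ) < (d' : ℕ) → g d < g d' := by
    intro d d' hdd'
    rw [hg]
    exact eU_lt (by rw [Fin.lt_def]; simpa using hdd')
  have hFcard : F.card = k + 1 := by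
    rw [hF, Finset.card_image_of_injOn, Finset.card_attach, Finset.card_range]
    intro d _ d' _ hdd'
    rcases lt_trichotomy (d : ℕ) (d' : ℕ) with h1 | h1 | h1
    · exact absurd (hgmono d d' h1) (by omega)
    · exact Subtype.ext h1
    · exact absurd (hgmono d' d h1) (by omega)
  have hFsub : F ⊆ (gU n I k (n+1)) ∩ Icc (eU n I k j : ℕ) (eU n I k j' : ℕ) := by
    rw [hF]
    intro v hv
    obtain ⟨d, _, rfl⟩ := Finset.mem_image.1 hv
    rw [Finset.mem_inter, Finset.mem_Icc, hg]
    refine ⟨eU_mem _, ?_, ?_⟩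
    · exact eU_le (by simp [Fin.le_def])
    · apply eU_le
      rw [Fin.le_def]
      have := Nat.lt_succ_iff.mp (Finset.mem_range.mp d.2)
      simpa using by omega
  have hwin := gU_feas n I hI k hub.1 hflt hub'.2
  have := Finset.card_le_card hFsub
  omega

variable (n I k)

/-- `edM n I k p` : the `p`-th power pattern of the staircase chain matrix of `U`. -/
noncomputable def edM (p : ℕ) : Matrix (Fin (n+1)) (Fin (n+1)) ℂ :=
  ∑ j : Fin (gU n I k (n+1)).card,
    if h : (j : ℕ) + k * p < (gU n I k (n+1)).card then
      Matrix.single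
        ⟨(eU n I k j : ℕ) - 1, by have := eU_bounds j; omega⟩
        ⟨(eU n I k ⟨(j : ℕ) + k * p, h⟩ : ℕ) - 1, by
          have := eU_bounds (n := n) (I := I) (k := k) ⟨(j : ℕ) + k * p, h⟩; omega⟩
        (1 : ℂ)
    else 0

variable {n I k}

/-- the index embedding into matrix coordinates -/
noncomputable def iotaU (j : Fin (gU n I k (n+1)).card) : Fin (n+1) :=
  ⟨(eU n I k j : ℕ) - 1, by have := eU_bounds j; omega⟩

theorem iotaU_inj : Function.Injective (iotaU (n := n) (I := I) (k := k)) := by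
  intro j j' h
  simp only [iotaU, Fin.mk.injEq] at h
  have h1 := eU_bounds (n := n) (I := I) (k := k) j
  have h2 := eU_bounds (n := n) (I := I) (k := k) j'
  have : (eU n I k j : ℕ) = (eU n I k j' : ℕ) := by omega
  exact (eU n I k).injective (Subtype.ext this)

theorem edM_def' (p : ℕ) : edM n I k p =
    ∑ j : Fin (gU n I k (n+1)).card,
      if h : (j : ℕ) + k * p < (gU n I k (n+1)).card then
        Matrix.single (iotaU j) (iotaU ⟨(j : ℕ) + k * p, h⟩) (1 : ℂ)
      else 0 := rfl

end edm
end GK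

-- chunk 5 : powers, rank lower bound, membership of edM
namespace GK
open Finset

section edm2

variable {n : ℕ} {I : Finset (ℕ × ℕ)} {k : ℕ}

theorem edM_succ (p : ℕ) :
    edM n I k p * edM n I k 1 = edM n I k (p + 1) := by
  classical
  rw [edM_def', edM_def', edM_def', Finset.sum_mul_sum]
  apply Finset.sum_congr rfl
  intro j _
  by_cases h1 : (j : ℕ) + k * p < (gU n I k (n+1)).card
  · rw [Finset.sum_eq_single (⟨(j : ℕ) + k * p, h1⟩ : Fin (gU n I k (n+1)).card)]
    · rw [dif_pos h1]
      by_cases h2 : (j : ℕ) + k * p + k * 1 < (gU n I k (n+1)).card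
      · have h2' : ((⟨(j : ℕ) + k * p, h1⟩ : Fin (gU n I k (n+1)).card) : ℕ) + k * 1 <
            (gU n I k (n+1)).card := h2
        have h3 : (j : ℕ) + k * (p + 1) < (gU n I k (n+1)).card := by
          have : k * (p + 1) = k * p + k * 1 := by ring
          omega
        have hAB : (⟨((⟨(j : ℕ) + k * p, h1⟩ : Fin (gU n I k (n+1)).card) : ℕ) + k * 1, h2'⟩ :
            Fin (gU n I k (n+1)).card) = ⟨(j : ℕ) + k * (p + 1), h3⟩ := by
          apply Fin.ext
          show (j : ℕ) + k * p + k * 1 = (j : ℕ) + k * (p + 1)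
          ring
        rw [dif_pos h2', dif_pos h3, Matrix.single_mul_single_same, one_mul, hAB]
      · have h2' : ¬ (((⟨(j : ℕ) + k * p, h1⟩ : Fin (gU n I k (n+1)).card) : ℕ) + k * 1 <
            (gU n I k (n+1)).card) := h2
        have h3 : ¬ ((j : ℕ) + k * (p + 1) < (gU n I k (n+1)).card) := by
          have : k * (p + 1) = k * p + k * 1 := by ring
          omega
        rw [dif_neg h2', dif_neg h3, mul_zero]
    · intro j' _ hne
      by_cases h2 : (j' : ℕ) + k * 1 < (gU n I k (n+1)).card
      · rw [dif_pos h1, dif_pos h2]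
        apply Matrix.single_mul_single_of_ne
        intro hcon
        exact hne (iotaU_inj hcon).symm
      · rw [dif_neg h2, mul_zero]
    · intro habs; exact absurd (Finset.mem_univ _) habs
  · have h3 : ¬ ((j : ℕ) + k * (p + 1) < (gU n I k (n+1)).card) := by
      have : k * (p + 1) = k * p + k * 1 := by ring
      omega
    rw [dif_neg h1, dif_neg h3]
    simp only [zero_mul]
    exact Finset.sum_const_zero

theorem edM_pow (p : ℕ) (hp : 1 ≤ p) : (edM n I k 1) ^ p = edM n I k p := by
  induction p with
  | zero => omega
  | succ p ih =>
    by_cases hp0 : p = 0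
    · subst hp0; rw [pow_one]
    · rw [pow_succ, ih (by omega), edM_succ]

theorem edM_col (p : ℕ) (i : Fin (gU n I k (n+1)).card)
    (h : (i : ℕ) + k * p < (gU n I k (n+1)).card) :
    (edM n I k p).mulVec (Pi.single (iotaU ⟨(i : ℕ) + k * p, h⟩) (1 : ℂ)) =
      Pi.single (iotaU i) 1 := by
  classical
  rw [Matrix.mulVec_single_one]
  funext r
  rw [Matrix.col_apply, edM_def', Matrix.sum_apply]
  rw [Finset.sum_eq_single i]
  · rw [dif_pos h]
    by_cases hr : r = iotaU i
    · subst hr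
      rw [Matrix.single_apply_same, Pi.single_eq_same]
    · rw [Matrix.single_apply_of_ne, Pi.single_eq_of_ne hr]
      rintro ⟨h1, -⟩
      exact hr h1.symm
  · intro j _ hji
    by_cases h2 : (j : ℕ) + k * p < (gU n I k (n+1)).card
    · rw [dif_pos h2]
      apply Matrix.single_apply_of_ne
      rintro ⟨-, h4⟩
      apply hji
      have := iotaU_inj h4
      apply Fin.ext
      have : (j : ℕ) + k * p = (i : ℕ) + k * p := congrArg Fin.val this
      omega
    · rw [dif_neg h2]; rfl
  · intro habs; exact absurd (Finset.mem_univ _) habs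

theorem edM_rank (p : ℕ) :
    (gU n I k (n+1)).card ≤ (edM n I k p).rank + k * p := by
  classical
  rcases le_or_gt (gU n I k (n+1)).card (k * p) with h | h
  · omega
  · have hklt : ∀ i : Fin ((gU n I k (n+1)).card - k * p), (i : ℕ) < (gU n I k (n+1)).card := by
      intro i; have := i.isLt; omega
    have hklt2 : ∀ i : Fin ((gU n I k (n+1)).card - k * p),
        (i : ℕ) + k * p < (gU n I k (n+1)).card := by
      intro i; have := i.isLt; omega
    set f : Fin ((gU n I k (n+1)).card - k * p) → Fin (n+1) := fun i =>
      iotaU (n := n) (I := I) (k := k) ⟨(i : ℕ), hklt i⟩ with hf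
    have hfinj : Function.Injective f := by
      intro i i' hii'
      rw [hf] at hii'
      have h1 := iotaU_inj hii'
      have h2 := congrArg Fin.val h1
      exact Fin.ext (by simpa using h2)
    have hli : LinearIndependent ℂ (fun i => (Pi.single (f i) 1 : Fin (n+1) → ℂ)) := by
      have hcomp : (fun i => (Pi.single (f i) 1 : Fin (n+1) → ℂ)) =
          (⇑(Pi.basisFun ℂ (Fin (n+1)))) ∘ f := by
        funext i
        simp [Pi.basisFun_apply]
      rw [hcomp]
      exact (Pi.basisFun ℂ (Fin (n+1))).linearIndependent.comp f hfinj
    have hspan : Submodule.span ℂ (Set.range (fun i => (Pi.single (f i) 1 : Fin (n+1) → ℂ))) ≤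
        LinearMap.range (edM n I k p).mulVecLin := by
      apply Submodule.span_le.2
      rintro _ ⟨i, rfl⟩
      refine ⟨Pi.single (iotaU (n := n) (I := I) (k := k)
        ⟨((⟨(i : ℕ), hklt i⟩ : Fin (gU n I k (n+1)).card) : ℕ) + k * p, hklt2 i⟩) 1, ?_⟩
      rw [Matrix.mulVecLin_apply, edM_col p ⟨(i : ℕ), hklt i⟩ (hklt2 i)]
    have hcard := finrank_span_eq_card hli
    have hmono := Submodule.finrank_mono hspan
    rw [hcard] at hmono
    simp only [Fintype.card_fin] at hmono
    have : (edM n I k p).rank = Module.finrank ℂ (LinearMap.range (edM n I k p).mulVecLin) := rfl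
    omega

theorem edM_one_mem (hI : IsMatrixIdeal n I) : edM n I k 1 ∈ idealSubmoduleM n I := by
  classical
  rw [edM_def', idealSubmoduleM]
  apply Submodule.sum_mem
  intro j _
  by_cases h : (j : ℕ) + k * 1 < (gU n I k (n+1)).card
  · rw [dif_pos h]
    apply Submodule.subset_span
    refine ⟨((eU n I k j : ℕ), (eU n I k ⟨(j : ℕ) + k * 1, h⟩ : ℕ)), ?_, ?_⟩
    · exact comp_edges hI (by show (j : ℕ) + k ≤ (j : ℕ) + k * 1; omega)
    · have hb1 := eU_bounds (n := n) (I := I) (k := k) j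
      have hb2 := eU_bounds (n := n) (I := I) (k := k) ⟨(j : ℕ) + k * 1, h⟩
      ext a b
      simp only [Matrix.of_apply]
      by_cases hab : a = iotaU j ∧ b = iotaU ⟨(j : ℕ) + k * 1, h⟩
      · obtain ⟨ha, hb⟩ := hab
        subst ha; subst hb
        rw [Matrix.single_apply_same, if_pos]
        constructor
        · show ((iotaU j : Fin (n+1)) : ℕ) + 1 = (eU n I k j : ℕ)
          rw [iotaU]
          simp only []
          omega
        · show ((iotaU ⟨(j : ℕ) + k * 1, h⟩ : Fin (n+1)) : ℕ) + 1 = _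
          rw [iotaU]
          simp only []
          omega
      · rw [Matrix.single_apply_of_ne, if_neg]
        · rintro ⟨h1, h2⟩
          apply hab
          constructor
          · apply Fin.ext
            rw [iotaU]
            simp only []
            omega
          · apply Fin.ext
            rw [iotaU]
            simp only []
            omega
        · rintro ⟨h1, h2⟩
          exact hab ⟨h1.symm, h2.symm⟩
  · rw [dif_neg h]; exact Submodule.zero_mem _

end edm2
end GK

-- chunk 6 : round-robin chains
namespace GK
open Finset

section chains

variable {n : ℕ} {I : Finset (ℕ × ℕ)} {k : ℕ}

noncomputable def chainC (n : ℕ) (I : Finset (ℕ × ℕ)) (k : ℕ) (r : Fin k) : Finset ℕ :=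
  (Finset.univ.filter (fun j : Fin (gU n I k (n+1)).card => (j : ℕ) % k = (r : ℕ))).image
    (fun j => ((eU n I k j : ℕ)))

theorem comp_edges_mod (hI : IsMatrixIdeal n I) {j j' : Fin (gU n I k (n+1)).card}
    (hlt : j < j') (hmod : (j : ℕ) % k = (j' : ℕ) % k) :
    ((eU n I k j : ℕ), (eU n I k j' : ℕ)) ∈ I := by
  apply comp_edges hI
  have hjj' : (j : ℕ) < (j' : ℕ) := hlt
  have hdvd : k ∣ ((j' : ℕ) - (j : ℕ)) :=
    (Nat.modEq_iff_dvd' (le_of_lt hjj')).1 hmod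
  have hpos : 0 < (j' : ℕ) - (j : ℕ) := by omega
  have := Nat.le_of_dvd hpos hdvd
  omega

theorem chainC_isChain (hI : IsMatrixIdeal n I) (r : Fin k) :
    IsChainInP n I (chainC n I k r) := by
  constructor
  · intro u hu
    obtain ⟨j, -, rfl⟩ := Finset.mem_image.1 hu
    exact gU_subset n I k (n+1) (eU_mem j)
  · intro a ha b hb hab
    obtain ⟨j, hj, rfl⟩ := Finset.mem_image.1 ha
    obtain ⟨j', hj', rfl⟩ := Finset.mem_image.1 hb
    simp only [Finset.mem_filter] at hj hj'
    have hmod : (j : ℕ) % k = (j' : ℕ) % k := by rw [hj.2, hj'.2]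
    rcases lt_trichotomy j j' with h | h | h
    · exact Or.inl (comp_edges_mod hI h hmod)
    · subst h; exact absurd rfl hab
    · exact Or.inr (comp_edges_mod hI h hmod.symm)

theorem chainC_biUnion (hk : 0 < k) :
    Finset.univ.biUnion (chainC n I k) = gU n I k (n+1) := by
  apply Finset.Subset.antisymm
  · intro u hu
    obtain ⟨r, -, hr⟩ := Finset.mem_biUnion.1 hu
    obtain ⟨j, -, rfl⟩ := Finset.mem_image.1 hr
    exact eU_mem j
  · intro u hu
    set j := (eU n I k).symm ⟨u, hu⟩ with hj
    refine Finset.mem_biUnion.2 ⟨⟨(j : ℕ) % k, Nat.mod_lt _ hk⟩, Finset.mem_univ _, ?_⟩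
    apply Finset.mem_image.2
    refine ⟨j, by simp, ?_⟩
    rw [hj]
    simp

end chains
end GK

-- chunk 7 : the main theorem
open Finset

theorem gerstenhaber_eq_greeneKleitman' (n ℓ : ℕ) (lam : ℕ → ℕ)
    (I : Finset (ℕ × ℕ)) (hI : IsMatrixIdeal n I)
    (hpos : ∀ i < ℓ, 0 < lam i) (hzero : ∀ i, ℓ ≤ i → lam i = 0)
    (hmono : ∀ i j : ℕ, i ≤ j → lam j ≤ lam i)
    (hsum : ∑ i ∈ Finset.range ℓ, lam i = n + 1)
    (hbound : ∀ x ∈ idealSubmoduleM n I, ∀ k : ℕ,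
      (x ^ k).rank ≤ ∑ i ∈ Finset.range ℓ, (lam i - k))
    (hattained : ∃ x ∈ idealSubmoduleM n I, ∀ k : ℕ,
      (x ^ k).rank = ∑ i ∈ Finset.range ℓ, (lam i - k)) :
    ∀ k : ℕ,
      IsGreatest
        {c : ℕ | ∃ C : Fin k → Finset ℕ, (∀ r, IsChainInP n I (C r)) ∧
          (Finset.univ.biUnion C).card = c}
        (∑ i ∈ Finset.range k, lam i) := by
  intro k
  classical
  rcases Nat.eq_zero_or_pos k with rfl | hk
  · constructor
    · exact ⟨fun r => r.elim0, fun r => r.elim0, by simp⟩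
    · rintro c ⟨C, hC, rfl⟩
      simp
  · obtain ⟨x, hxmem, hxrank⟩ := hattained
    have hxsupp := GK.supp_of_mem_ideal hxmem
    obtain ⟨m, S, hSsub, hScov, hScard, hSchain⟩ := GK.dual hI k (n+1) le_rfl
    set U := GK.gU n I k (n+1) with hU
    have hUsub : U ⊆ Finset.Icc 1 (n+1) := GK.gU_subset n I k (n+1)
    have hUfull : (Finset.Icc 1 (n+1)).filter (· ∈ U) = U := by
      rw [Finset.filter_mem_eq_inter]
      exact Finset.inter_eq_right.2 hUsub
    rw [hUfull] at hScard
    set Sk := ∑ i ∈ Finset.range k, lam i with hSk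
    have hSk_nplus : ∀ K : ℕ, (∑ i ∈ Finset.range K, lam i) ≤ n + 1 := by
      intro K
      rcases le_total K ℓ with h | h
      · calc ∑ i ∈ Finset.range K, lam i
            ≤ ∑ i ∈ Finset.range ℓ, lam i :=
              Finset.sum_le_sum_of_subset (Finset.range_subset_range.2 h)
          _ = n + 1 := hsum
      · rw [show (∑ i ∈ Finset.range K, lam i) = ∑ i ∈ Finset.range ℓ, lam i from
          (Finset.sum_subset (Finset.range_subset_range.2 h)
            (fun i _ hni => hzero i (by simpa using hni))).symm, hsum]
    have hsum_trunc : ∀ q mm : ℕ,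
        (∑ i ∈ Finset.range q, (lam i - mm)) ≤ ∑ i ∈ Finset.range ℓ, (lam i - mm) := by
      intro q mm
      rcases le_total q ℓ with h | h
      · exact Finset.sum_le_sum_of_subset (Finset.range_subset_range.2 h)
      · apply le_of_eq
        symm
        apply Finset.sum_subset (Finset.range_subset_range.2 h)
        intro i _ hni
        rw [hzero i (by simpa using hni)]
        omega
    -- lower bound : Sk ≤ U.card
    have hlow : Sk ≤ U.card := by
      rcases Nat.eq_zero_or_pos m with rfl | hm1
      · have hSempty : S = ∅ := by
          rcases Finset.eq_empty_or_nonempty S with h | ⟨s, hs⟩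
          · exact h
          · exfalso
            have := hSchain {s} (by simpa using hs)
              (by intro a ha b hb hab; simp only [Finset.mem_singleton] at ha hb
                  subst ha; subst hb; exact absurd rfl hab)
            simpa using this
        rw [hSempty] at hScard
        simp only [Finset.card_empty, Nat.zero_add, Nat.mul_zero] at hScard
        calc Sk ≤ n + 1 := hSk_nplus k
          _ = U.card := by omega
      · set R : Fin (n+1) → Fin (n+1) → Prop :=
          fun a b => ((a : ℕ) + 1, (b : ℕ) + 1) ∈ I with hR
        have hRtrans : Transitive R := by
          intro a b c hab hbc
          have h1 := hI.1 _ hab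
          have h2 := hI.1 _ hbc
          simp only at h1 h2
          exact hI.2 _ hbc ((a : ℕ) + 1, (c : ℕ) + 1) (by omega) (by omega) le_rfl h2.2.2
        have hRlt : ∀ a b : Fin (n+1), R a b → a < b := by
          intro a b hab
          have := (hI.1 _ hab).2.1
          simp only at this
          rw [Fin.lt_def]
          omega
        set dwn : ℕ → Fin (n+1) := fun u => ⟨(u - 1) % (n+1), Nat.mod_lt _ (by omega)⟩
          with hdwn
        have hdwn_eq : ∀ u, 1 ≤ u → u ≤ n + 1 → ((dwn u : ℕ)) = u - 1 := by
          intro u h1 h2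
          rw [hdwn]
          exact Nat.mod_eq_of_lt (by omega)
        set Sf := S.image dwn with hSf
        have hSfcard : Sf.card = S.card := by
          apply Finset.card_image_of_injOn
          intro u hu u' hu' h
          have hub := hSsub hu
          have hub' := hSsub hu'
          simp only [Finset.mem_Icc] at hub hub'
          have e1 := hdwn_eq u hub.1 hub.2
          have e2 := hdwn_eq u' hub'.1 hub'.2
          have := congrArg Fin.val h
          omega
        have hchainsF : ∀ C : Finset (Fin (n+1)), C ⊆ Sf →
            (∀ a ∈ C, ∀ b ∈ C, a ≠ b → R a b ∨ R b a) → C.card ≤ m := by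
          intro C hCsub hCcomp
          set Cn := C.image (fun a : Fin (n+1) => (a : ℕ) + 1) with hCn
          have hCncard : Cn.card = C.card := by
            apply Finset.card_image_of_injOn
            intro a _ b _ h
            have h' : (a : ℕ) + 1 = (b : ℕ) + 1 := h
            exact Fin.ext (by omega)
          rw [← hCncard]
          apply hSchain
          · intro u hu
            obtain ⟨a, ha, rfl⟩ := Finset.mem_image.1 hu
            obtain ⟨s, hsS, hsa⟩ := Finset.mem_image.1 (hCsub ha)
            have hsb := hSsub hsS
            simp only [Finset.mem_Icc] at hsb
            have := hdwn_eq s hsb.1 hsb.2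
            have := congrArg Fin.val hsa
            have : (a : ℕ) + 1 = s := by omega
            rw [this]; exact hsS
          · intro u hu v hv huv
            obtain ⟨a, ha, rfl⟩ := Finset.mem_image.1 hu
            obtain ⟨b, hb, rfl⟩ := Finset.mem_image.1 hv
            have hab : a ≠ b := fun h => huv (by rw [h])
            exact hCcomp a ha b hb hab
        have happ := GK.rankUB hRtrans hRlt m hm1 Finset.univ Sf x
          (fun a b hab => ⟨hxsupp a b hab, Finset.mem_univ _, Finset.mem_univ _⟩)
          (Finset.subset_univ _) hchainsF
        have hunivcard : (Finset.univ : Finset (Fin (n+1))).card = n + 1 := by simp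
        have hrankx := hxrank m
        have harith : Sk ≤ k * m + ∑ i ∈ Finset.range ℓ, (lam i - m) := by
          have h1 : Sk ≤ ∑ i ∈ Finset.range k, (m + (lam i - m)) :=
            Finset.sum_le_sum (fun i _ => by omega)
          rw [Finset.sum_add_distrib, Finset.sum_const, Finset.card_range,
            smul_eq_mul] at h1
          have h2 := hsum_trunc k m
          omega
        omega
    -- upper bound : U.card ≤ Sk
    have hhigh : U.card ≤ Sk := by
      by_cases hkl : k < ℓ
      · have hm'pos : 1 ≤ lam k := hpos k hkl
        have hmem := GK.edM_one_mem (n := n) (I := I) (k := k) hI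
        have hb := hbound _ hmem (lam k)
        rw [GK.edM_pow (lam k) hm'pos] at hb
        have hrk : U.card ≤ (GK.edM n I k (lam k)).rank + k * lam k :=
          GK.edM_rank (n := n) (I := I) (k := k) (lam k)
        have he1 : ∑ i ∈ Finset.range ℓ, (lam i - lam k) =
            ∑ i ∈ Finset.range k, (lam i - lam k) := by
          symm
          apply Finset.sum_subset (Finset.range_subset_range.2 (le_of_lt hkl))
          intro i hi hni
          simp only [Finset.mem_range] at hi hni
          have := hmono k i (by omega)
          omega
        have he2 : (∑ i ∈ Finset.range k, (lam i - lam k)) + k * lam k = Sk := by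
          rw [hSk]
          have hpt : ∀ i ∈ Finset.range k, (lam i - lam k) + lam k = lam i := by
            intro i hi
            simp only [Finset.mem_range] at hi
            have := hmono i k (le_of_lt hi)
            omega
          calc (∑ i ∈ Finset.range k, (lam i - lam k)) + k * lam k
              = ∑ i ∈ Finset.range k, ((lam i - lam k) + lam k) := by
                rw [Finset.sum_add_distrib, Finset.sum_const, Finset.card_range, smul_eq_mul]
            _ = ∑ i ∈ Finset.range k, lam i := Finset.sum_congr rfl hpt
        omega
      · push_neg at hkl
        have hSkval : Sk = n + 1 := by
          rw [hSk, ← hsum]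
          symm
          exact Finset.sum_subset (Finset.range_subset_range.2 hkl)
            (fun i _ hni => hzero i (by simpa using hni))
        have hcard := Finset.card_le_card hUsub
        rw [Nat.card_Icc] at hcard
        omega
    have hteq : U.card = Sk := le_antisymm hhigh hlow
    constructor
    · refine ⟨GK.chainC n I k, fun r => GK.chainC_isChain hI r, ?_⟩
      rw [GK.chainC_biUnion hk]
      exact hteq
    · rintro c ⟨C, hC, rfl⟩
      set U' := Finset.univ.biUnion C with hU'
      have hU'sub : U' ⊆ Finset.Icc 1 (n+1) := by
        intro u hu
        obtain ⟨r, -, hr⟩ := Finset.mem_biUnion.1 hu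
        exact (hC r).1 hr
      have h1 : (U' ∩ S).card ≤ k * m := by
        have hcover : U' ∩ S ⊆ Finset.univ.biUnion (fun r => C r ∩ S) := by
          intro u hu
          obtain ⟨hu1, hu2⟩ := Finset.mem_inter.1 hu
          obtain ⟨r, -, hr⟩ := Finset.mem_biUnion.1 hu1
          exact Finset.mem_biUnion.2 ⟨r, Finset.mem_univ _, Finset.mem_inter.2 ⟨hr, hu2⟩⟩
        calc (U' ∩ S).card ≤ (Finset.univ.biUnion (fun r => C r ∩ S)).card :=
              Finset.card_le_card hcover
          _ ≤ ∑ r : Fin k, (C r ∩ S).card := Finset.card_biUnion_le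
          _ ≤ ∑ _r : Fin k, m := Finset.sum_le_sum (fun r _ =>
              hSchain (C r ∩ S) Finset.inter_subset_right
                (fun a ha b hb hab =>
                  (hC r).2 a (Finset.mem_inter.1 ha).1 b (Finset.mem_inter.1 hb).1 hab))
          _ = k * m := by rw [Finset.sum_const, Finset.card_univ, Fintype.card_fin, smul_eq_mul]
      have h2 : (U' \ S).card + S.card ≤ n + 1 := by
        have hsub2 : U' \ S ⊆ Finset.Icc 1 (n+1) \ S :=
          Finset.sdiff_subset_sdiff hU'sub (Finset.Subset.refl _)
        have h2a := Finset.card_le_card hsub2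
        have h3 := Finset.card_sdiff_add_card_eq_card hSsub
        rw [Nat.card_Icc] at h3
        omega
      have h4 := Finset.card_inter_add_card_sdiff U' S
      omega

/-- The Gerstenhaber partition `λ_I` (the generic Jordan type of the
ad-nilpotent ideal `I`) equals the Greene–Kleitman partition of the unit interval
order `P_I`: for every `k`, `λ_1 + ⋯ + λ_k` is the maximum cardinality of a union of
`k` chains in `P_I`. -/
theorem gerstenhaber_eq_greeneKleitman (n ℓ : ℕ) (lam : ℕ → ℕ)
    (I : Finset (ℕ × ℕ)) (hI : IsMatrixIdeal n I)
    (hpos : ∀ i < ℓ, 0 < lam i) (hzero : ∀ i, ℓ ≤ i → lam i = 0)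
    (hmono : ∀ i j : ℕ, i ≤ j → lam j ≤ lam i)
    (hsum : ∑ i ∈ Finset.range ℓ, lam i = n + 1)
    (hbound : ∀ x ∈ idealSubmoduleM n I, ∀ k : ℕ,
      (x ^ k).rank ≤ ∑ i ∈ Finset.range ℓ, (lam i - k))
    (hattained : ∃ x ∈ idealSubmoduleM n I, ∀ k : ℕ,
      (x ^ k).rank = ∑ i ∈ Finset.range ℓ, (lam i - k)) :
    ∀ k : ℕ,
      IsGreatest
        {c : ℕ | ∃ C : Fin k → Finset ℕ, (∀ r, IsChainInP n I (C r)) ∧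
          (Finset.univ.biUnion C).card = c}
        (∑ i ∈ Finset.range k, lam i) := by
  exact gerstenhaber_eq_greeneKleitman' n ℓ lam I hI hpos hzero hmono hsum hbound hattained
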